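/- Let (X, μ) be a finite measure space and H a complex Hilbert space. For every μ-continuous POVM φ on X with values in effects on H, there exists a unique linear map ψ : L∞(X, μ; ℂ) → B(H) that is positive (maps μ-a.e. nonnegative real functions to positive operators), unital (ψ(1) = id), normal (for every uniformly bounded sequence of real-valued functions (f n) increasing μ-a.e. and converging μ-a.e. to f, ψ(f n) → ψ(f) in the weak operator topology), and satisfies ψ(1_M) = φ(M) for every measurable M ⊆ X. -/

import Mathlib

open MeasureTheory Filter Topology
open scoped ComplexInnerProductSpace ComplexOrder ENNReal

universe u v

noncomputable section

/-- An operator `A` on a complex Hilbert space is positive if `⟪A ψ, ψ⟫` is real and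
nonnegative for every vector `ψ` (expressed via the order on `ℂ`). -/
def IsPositiveOp {H : Type*} [NormedAddCommGroup H] [InnerProductSpace ℂ H]
    (A : H →L[ℂ] H) : Prop :=
  ∀ ψ : H, (0 : ℂ) ≤ ⟪A ψ, ψ⟫

/-- An effect is an operator `A` with both `A` and `id - A` positive. -/
def IsEffect {H : Type*} [NormedAddCommGroup H] [InnerProductSpace ℂ H]
    (A : H →L[ℂ] H) : Prop :=
  IsPositiveOp A ∧ IsPositiveOp (1 - A)

/-- A POVM on a measurable space `X` with values in the effects on `H`. -/
def IsPOVM {X : Type*} [MeasurableSpace X] {H : Type*} [NormedAddCommGroup H]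
    [InnerProductSpace ℂ H] (φ : ∀ M : Set X, MeasurableSet M → (H →L[ℂ] H)) : Prop :=
  (∀ (M : Set X) (hM : MeasurableSet M), IsEffect (φ M hM)) ∧
  φ Set.univ MeasurableSet.univ = 1 ∧
  ∀ (M : ℕ → Set X) (hM : ∀ n, MeasurableSet (M n)),
    Pairwise (Function.onFun Disjoint M) →
    ∀ ψ : H, ⟪φ (⋃ n, M n) (MeasurableSet.iUnion hM) ψ, ψ⟫ = ∑' n, ⟪φ (M n) (hM n) ψ, ψ⟫

/-- Convergence of a sequence of operators in the weak operator topology. -/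
def WOTTendsto {H : Type*} [NormedAddCommGroup H] [InnerProductSpace ℂ H]
    (T : ℕ → H →L[ℂ] H) (L : H →L[ℂ] H) : Prop :=
  ∀ ψ χ : H, Tendsto (fun n => ⟪T n ψ, χ⟫) atTop (𝓝 ⟪L ψ, χ⟫)

/-- A linear map `L∞(X,μ;ℂ) → B(H)` is positive if it maps μ-a.e. nonnegative (real-valued)
functions to positive operators. -/
def IsPositiveLinfMap {X : Type*} [MeasurableSpace X] {μ : Measure X} {H : Type*}
    [NormedAddCommGroup H] [InnerProductSpace ℂ H]
    (ψ : Lp ℂ ∞ μ →ₗ[ℂ] (H →L[ℂ] H)) : Prop :=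
  ∀ f : Lp ℂ ∞ μ, (∀ᵐ x ∂μ, (0 : ℂ) ≤ f x) → IsPositiveOp (ψ f)

/-- A linear map `L∞(X,μ;ℂ) → B(H)` is normal if for every uniformly bounded sequence of
real-valued functions increasing μ-a.e. and converging μ-a.e., the images converge in the
weak operator topology. -/
def IsNormalLinfMap {X : Type*} [MeasurableSpace X] {μ : Measure X} {H : Type*}
    [NormedAddCommGroup H] [InnerProductSpace ℂ H]
    (ψ : Lp ℂ ∞ μ →ₗ[ℂ] (H →L[ℂ] H)) : Prop :=
  ∀ (f : ℕ → Lp ℂ ∞ μ) (g : Lp ℂ ∞ μ) (C : ℝ),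
    (∀ n, ∀ᵐ x ∂μ, (f n x).im = 0 ∧ ‖f n x‖ ≤ C) →
    (∀ᵐ x ∂μ, ∀ n, (f n x).re ≤ (f (n + 1) x).re) →
    (∀ᵐ x ∂μ, Tendsto (fun n => f n x) atTop (𝓝 (g x))) →
    WOTTendsto (fun n => ψ (f n)) (ψ g)

section Aux

variable {X : Type u} [MeasurableSpace X] {H : Type v} [NormedAddCommGroup H]
  [InnerProductSpace ℂ H] [CompleteSpace H]
  {φ : ∀ M : Set X, MeasurableSet M → (H →L[ℂ] H)}

lemma povm_congr {M N : Set X} (h : M = N) (hM : MeasurableSet M) (hN : MeasurableSet N) :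
    φ M hM = φ N hN := by subst h; rfl

lemma povm_nonneg (hφ : IsPOVM φ) (M : Set X) (hM : MeasurableSet M) (z : H) :
    (0:ℂ) ≤ ⟪φ M hM z, z⟫ := (hφ.1 M hM).1 z

lemma povm_im (hφ : IsPOVM φ) (M : Set X) (hM : MeasurableSet M) (z : H) :
    (⟪φ M hM z, z⟫ : ℂ).im = 0 := ((Complex.le_def.mp (povm_nonneg hφ M hM z)).2).symm

lemma povm_re_nonneg (hφ : IsPOVM φ) (M : Set X) (hM : MeasurableSet M) (z : H) :
    0 ≤ (⟪φ M hM z, z⟫ : ℂ).re := by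
  simpa using (Complex.le_def.mp (povm_nonneg hφ M hM z)).1

lemma povm_empty (hφ : IsPOVM φ) (z : H) :
    (⟪φ ∅ MeasurableSet.empty z, z⟫ : ℂ) = 0 := by
  have h := hφ.2.2 (fun _ => (∅ : Set X)) (fun _ => MeasurableSet.empty)
    (fun i j _ => disjoint_bot_left) z
  rw [povm_congr (φ := φ) (Set.iUnion_const (∅ : Set X)) _ MeasurableSet.empty] at h
  set a : ℂ := ⟪φ ∅ MeasurableSet.empty z, z⟫ with ha
  by_cases hs : Summable (fun _ : ℕ => a)
  · exact tendsto_nhds_unique tendsto_const_nhds hs.tendsto_atTop_zero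
  · rw [tsum_eq_zero_of_not_summable hs] at h; exact h

lemma povm_pair (hφ : IsPOVM φ) {A B : Set X} (hA : MeasurableSet A) (hB : MeasurableSet B)
    (hd : Disjoint A B) (z : H) :
    (⟪φ (A ∪ B) (hA.union hB) z, z⟫ : ℂ) = ⟪φ A hA z, z⟫ + ⟪φ B hB z, z⟫ := by
  set M : ℕ → Set X := fun n => match n with | 0 => A | 1 => B | _ => ∅ with hMdef
  have hM : ∀ n, MeasurableSet (M n) := by
    intro n; match n with
    | 0 => exact hA
    | 1 => exact hB
    | (n+2) => exact MeasurableSet.empty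
  have hpw : Pairwise (Function.onFun Disjoint M) := by
    intro i j hij
    match i, j with
    | 0, 0 => exact absurd rfl hij
    | 1, 1 => exact absurd rfl hij
    | 0, 1 => exact hd
    | 1, 0 => exact hd.symm
    | 0, (j+2) => exact disjoint_bot_right
    | 1, (j+2) => exact disjoint_bot_right
    | (i+2), j => exact disjoint_bot_left
  have hU : (⋃ n, M n) = A ∪ B := by
    apply Set.Subset.antisymm
    · refine Set.iUnion_subset fun n => ?_
      match n with
      | 0 => exact Set.subset_union_left
      | 1 => exact Set.subset_union_right
      | (n+2) => exact Set.empty_subset _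
    · refine Set.union_subset ?_ ?_
      · exact Set.subset_iUnion M 0
      · exact Set.subset_iUnion M 1
  have h := hφ.2.2 M hM hpw z
  rw [povm_congr (φ := φ) hU _ (hA.union hB)] at h
  rw [h]
  have hz : ∀ n ∉ Finset.range 2, (⟪φ (M n) (hM n) z, z⟫ : ℂ) = 0 := by
    intro n hn
    match n with
    | 0 => simp at hn
    | 1 => simp at hn
    | (n+2) => exact povm_empty hφ z
  rw [tsum_eq_sum hz]
  simp [Finset.sum_range_succ]
  rfl

lemma povm_mono (hφ : IsPOVM φ) {A B : Set X} (hA : MeasurableSet A) (hB : MeasurableSet B)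
    (h : A ⊆ B) (z : H) :
    (⟪φ A hA z, z⟫ : ℂ).re ≤ (⟪φ B hB z, z⟫ : ℂ).re := by
  have hd : Disjoint A (B \ A) := disjoint_sdiff_self_right
  have hcov : A ∪ (B \ A) = B := Set.union_diff_cancel h
  have hp := povm_pair hφ hA (hB.diff hA) hd z
  rw [povm_congr (φ := φ) hcov _ hB] at hp
  have h3 := povm_re_nonneg hφ (B \ A) (hB.diff hA) z
  rw [hp, Complex.add_re]
  linarith

lemma povm_additive (hφ : IsPOVM φ) (z : H) (M : ℕ → Set X) (hM : ∀ n, MeasurableSet (M n))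
    (hd : Pairwise (Function.onFun Disjoint M)) :
    ENNReal.ofReal ((⟪φ (⋃ n, M n) (MeasurableSet.iUnion hM) z, z⟫ : ℂ).re)
      = ∑' n, ENNReal.ofReal ((⟪φ (M n) (hM n) z, z⟫ : ℂ).re) := by
  set r : ℕ → ℝ := fun n => (⟪φ (M n) (hM n) z, z⟫ : ℂ).re with hr
  have hr0 : ∀ n, 0 ≤ r n := fun n => povm_re_nonneg hφ _ _ z
  have hUN : ∀ N : ℕ, MeasurableSet (⋃ n ∈ Finset.range N, M n) := fun N =>
    (Finset.range N).measurableSet_biUnion (fun b _ => hM b)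
  have hps : ∀ N, ∑ n ∈ Finset.range N, r n
      = (⟪φ (⋃ n ∈ Finset.range N, M n) (hUN N) z, z⟫ : ℂ).re := by
    intro N
    induction N with
    | zero =>
      have h0 : (⋃ n ∈ Finset.range 0, M n) = (∅ : Set X) := by simp
      rw [povm_congr (φ := φ) h0 (hUN 0) MeasurableSet.empty, povm_empty hφ z]
      simp
    | succ N ih =>
      have hset : (⋃ n ∈ Finset.range (N+1), M n)
          = (⋃ n ∈ Finset.range N, M n) ∪ M N := by
        rw [Finset.range_add_one]
        simp [Set.biUnion_insert, Set.union_comm]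
      have hdisj : Disjoint (⋃ n ∈ Finset.range N, M n) (M N) := by
        simp only [Set.disjoint_iUnion_left]
        intro i hi
        exact hd (Finset.mem_range.mp hi).ne
      have hpair := povm_pair hφ (hUN N) (hM N) hdisj z
      rw [povm_congr (φ := φ) hset.symm _ (hUN (N+1))] at hpair
      rw [Finset.sum_range_succ, ih, hpair, Complex.add_re]
  have hmono : ∀ N, (⟪φ (⋃ n ∈ Finset.range N, M n) (hUN N) z, z⟫ : ℂ).re
      ≤ (⟪φ (⋃ n, M n) (MeasurableSet.iUnion hM) z, z⟫ : ℂ).re := by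
    intro N
    exact povm_mono hφ (hUN N) (MeasurableSet.iUnion hM)
      (Set.iUnion₂_subset fun i _ => Set.subset_iUnion M i) z
  have hsum : Summable r :=
    summable_of_sum_range_le hr0 (fun N => by rw [hps N]; exact hmono N)
  have him : ∀ n, (⟪φ (M n) (hM n) z, z⟫ : ℂ).im = 0 := fun n => povm_im hφ _ _ z
  have hfun : (fun n => (⟪φ (M n) (hM n) z, z⟫ : ℂ)) = fun n => ((r n : ℝ) : ℂ) := by
    funext n
    apply Complex.ext
    · simp [hr]
    · simp [him n]
  have hsumC : Summable (fun n => (⟪φ (M n) (hM n) z, z⟫ : ℂ)) := by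
    rw [hfun]
    exact hsum.map (Complex.ofRealHom : ℝ →+* ℂ).toAddMonoidHom Complex.continuous_ofReal
  have htsum := hφ.2.2 M hM hd z
  have hre : (⟪φ (⋃ n, M n) (MeasurableSet.iUnion hM) z, z⟫ : ℂ).re = ∑' n, r n := by
    rw [htsum, Complex.re_tsum hsumC]
  rw [hre, ENNReal.ofReal_tsum_of_nonneg hr0 hsum]

def povmMeasure (hφ : IsPOVM φ) (z : H) : Measure X :=
  Measure.ofMeasurable (fun M hM => ENNReal.ofReal ((⟪φ M hM z, z⟫ : ℂ).re))
    (by simp [povm_empty hφ z])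
    (povm_additive hφ z)

lemma povmMeasure_apply (hφ : IsPOVM φ) (z : H) {M : Set X} (hM : MeasurableSet M) :
    povmMeasure hφ z M = ENNReal.ofReal ((⟪φ M hM z, z⟫ : ℂ).re) :=
  Measure.ofMeasurable_apply M hM

instance povmMeasure.isFiniteMeasure (hφ : IsPOVM φ) (z : H) :
    IsFiniteMeasure (povmMeasure hφ z) := by
  constructor
  rw [povmMeasure_apply hφ z MeasurableSet.univ]
  exact ENNReal.ofReal_lt_top

lemma povmMeasure_univ (hφ : IsPOVM φ) (z : H) :
    povmMeasure hφ z Set.univ = ENNReal.ofReal (‖z‖^2) := by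
  rw [povmMeasure_apply hφ z MeasurableSet.univ, hφ.2.1]
  congr 1
  simpa using inner_self_eq_norm_sq (𝕜 := ℂ) z

lemma povmMeasure_univ_toReal (hφ : IsPOVM φ) (z : H) :
    (povmMeasure hφ z Set.univ).toReal = ‖z‖^2 := by
  rw [povmMeasure_univ hφ z]
  exact ENNReal.toReal_ofReal (sq_nonneg _)

variable {μ : Measure X}

lemma povmMeasure_ac (hφ : IsPOVM φ)
    (hcont : ∀ (M : Set X) (hM : MeasurableSet M), μ M = 0 → φ M hM = 0) (z : H) :
    povmMeasure hφ z ≪ μ := by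
  refine Measure.AbsolutelyContinuous.mk fun s hs h0 => ?_
  rw [povmMeasure_apply hφ z hs, hcont s hs h0]
  simp

lemma ae_povm (hφ : IsPOVM φ)
    (hcont : ∀ (M : Set X) (hM : MeasurableSet M), μ M = 0 → φ M hM = 0) (z : H)
    {p : X → Prop} (h : ∀ᵐ x ∂μ, p x) : ∀ᵐ x ∂(povmMeasure hφ z), p x :=
  h.filter_mono (povmMeasure_ac hφ hcont z).ae_le

lemma integrable_povm (hφ : IsPOVM φ)
    (hcont : ∀ (M : Set X) (hM : MeasurableSet M), μ M = 0 → φ M hM = 0) (z : H)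
    {f : X → ℂ} {C : ℝ} (hmeas : AEStronglyMeasurable f μ) (hb : ∀ᵐ x ∂μ, ‖f x‖ ≤ C) :
    Integrable f (povmMeasure hφ z) := by
  have hm : AEStronglyMeasurable f (povmMeasure hφ z) :=
    hmeas.mono_ac (povmMeasure_ac hφ hcont z)
  exact (integrable_const C).mono' hm (ae_povm hφ hcont z hb)

/-- The integral of `f` against the scalar measure attached to `z`. -/
def qInt (hφ : IsPOVM φ) (f : X → ℂ) (z : H) : ℂ := ∫ x, f x ∂(povmMeasure hφ z)

lemma qInt_congr (hφ : IsPOVM φ)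
    (hcont : ∀ (M : Set X) (hM : MeasurableSet M), μ M = 0 → φ M hM = 0) (z : H)
    {f g : X → ℂ} (h : f =ᵐ[μ] g) : qInt hφ f z = qInt hφ g z :=
  integral_congr_ae (ae_povm hφ hcont z h)

lemma qInt_norm_le (hφ : IsPOVM φ)
    (hcont : ∀ (M : Set X) (hM : MeasurableSet M), μ M = 0 → φ M hM = 0) (z : H)
    {f : X → ℂ} {C : ℝ} (hb : ∀ᵐ x ∂μ, ‖f x‖ ≤ C) :
    ‖qInt hφ f z‖ ≤ C * ‖z‖^2 := by
  have h := norm_integral_le_of_norm_le_const (μ := povmMeasure hφ z) (f := f)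
    (ae_povm hφ hcont z hb)
  rwa [measureReal_def, povmMeasure_univ_toReal hφ z] at h

lemma qInt_indicator (hφ : IsPOVM φ) {M : Set X} (hM : MeasurableSet M) (z : H) :
    qInt hφ (M.indicator fun _ => (1:ℂ)) z = ⟪z, φ M hM z⟫ := by
  unfold qInt
  rw [integral_indicator_const (1:ℂ) hM, measureReal_def, povmMeasure_apply hφ z hM,
    ENNReal.toReal_ofReal (povm_re_nonneg hφ M hM z)]
  have him := povm_im hφ M hM z
  have h1 : ((⟪φ M hM z, z⟫ : ℂ).re : ℂ) = ⟪φ M hM z, z⟫ := by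
    apply Complex.ext <;> simp [him]
  rw [Complex.real_smul, mul_one, h1]
  have hconj : (starRingEnd ℂ) (⟪φ M hM z, z⟫ : ℂ) = ⟪φ M hM z, z⟫ :=
    Complex.conj_eq_iff_im.mpr him
  rw [← hconj, inner_conj_symm]

lemma povmMeasure_smul (hφ : IsPOVM φ) (c : ℂ) (z : H) :
    povmMeasure hφ (c • z) = ENNReal.ofReal (‖c‖^2) • povmMeasure hφ z := by
  apply Measure.ext
  intro s hs
  rw [Measure.smul_apply, smul_eq_mul, povmMeasure_apply hφ _ hs, povmMeasure_apply hφ z hs]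
  have h1 : (⟪φ s hs (c • z), c • z⟫ : ℂ) = ((‖c‖^2 : ℝ) : ℂ) * ⟪φ s hs z, z⟫ := by
    rw [ContinuousLinearMap.map_smul, inner_smul_left, inner_smul_right, ← mul_assoc]
    congr 1
    rw [Complex.sq_norm, Complex.normSq_eq_conj_mul_self]
    try push_cast
    try ring
  rw [h1, Complex.re_ofReal_mul, ENNReal.ofReal_mul (sq_nonneg _)]

lemma povmMeasure_zero_vec (hφ : IsPOVM φ) : povmMeasure hφ (0 : H) = 0 := by
  apply Measure.ext
  intro s hs
  rw [povmMeasure_apply hφ _ hs]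
  simp

lemma qInt_smul_vec (hφ : IsPOVM φ) (f : X → ℂ) (c : ℂ) (z : H) :
    qInt hφ f (c • z) = (‖c‖^2 : ℝ) • qInt hφ f z := by
  unfold qInt
  rw [povmMeasure_smul hφ c z, integral_smul_measure, ENNReal.toReal_ofReal (sq_nonneg _)]

/-- The polarized form. -/
def bForm (hφ : IsPOVM φ) (f : X → ℂ) (x y : H) : ℂ :=
  (qInt hφ f (x + y) - qInt hφ f (x - y) - Complex.I * qInt hφ f (x + Complex.I • y)
    + Complex.I * qInt hφ f (x - Complex.I • y)) / 4

lemma bForm_diag (hφ : IsPOVM φ) (f : X → ℂ) (z : H) :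
    bForm hφ f z z = qInt hφ f z := by
  have h2 : z + z = (2:ℂ) • z := (two_smul ℂ z).symm
  have h0 : z - z = (0:ℂ) • z := by simp
  have hI1 : z + Complex.I • z = ((1 + Complex.I) : ℂ) • z := by rw [add_smul, one_smul]
  have hI2 : z - Complex.I • z = ((1 - Complex.I) : ℂ) • z := by rw [sub_smul, one_smul]
  have hn2 : ‖(2:ℂ)‖^2 = (4:ℝ) := by
    rw [Complex.sq_norm]
    norm_num [Complex.normSq_apply]
  have hnI1 : ‖((1 + Complex.I) : ℂ)‖^2 = (2:ℝ) := by
    rw [Complex.sq_norm]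
    norm_num [Complex.normSq_apply]
  have hnI2 : ‖((1 - Complex.I) : ℂ)‖^2 = (2:ℝ) := by
    rw [Complex.sq_norm]
    norm_num [Complex.normSq_apply]
  have hn0 : ‖(0:ℂ)‖^2 = (0:ℝ) := by simp
  unfold bForm
  rw [h2, h0, hI1, hI2, qInt_smul_vec, qInt_smul_vec, qInt_smul_vec, qInt_smul_vec,
    hn2, hnI1, hnI2, hn0]
  simp only [Complex.real_smul]
  push_cast
  ring

lemma bForm_of_op (hφ : IsPOVM φ) {f : X → ℂ} {T : H →L[ℂ] H}
    (hT : ∀ z, qInt hφ f z = ⟪z, T z⟫) (x y : H) :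
    bForm hφ f x y = ⟪x, T y⟫ := by
  have key : ∀ w : H, (⟪(T : H →ₗ[ℂ] H) w, w⟫ : ℂ) = (starRingEnd ℂ) (qInt hφ f w) := by
    intro w
    rw [hT w, inner_conj_symm]
    rfl
  have hx : (⟪x, T y⟫ : ℂ) = (starRingEnd ℂ) ⟪(T : H →ₗ[ℂ] H) y, x⟫ := by
    rw [inner_conj_symm]
    rfl
  rw [hx, inner_map_polarization]
  simp only [key]
  simp only [map_div₀, map_add, map_sub, map_mul, Complex.conj_I, Complex.conj_conj, map_ofNat]
  unfold bForm
  ring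

lemma integrable_simple (hφ : IsPOVM φ) (s : SimpleFunc X ℂ) (z : H) :
    Integrable (⇑s) (povmMeasure hφ z) := by
  obtain ⟨C, hC⟩ := s.exists_forall_norm_le
  exact (integrable_const C).mono' s.aestronglyMeasurable (Eventually.of_forall hC)

lemma qInt_simple (hφ : IsPOVM φ) (s : SimpleFunc X ℂ) :
    ∃ T : H →L[ℂ] H, ∀ z, qInt hφ (⇑s) z = ⟪z, T z⟫ := by
  induction s using SimpleFunc.induction with
  | @const c M hM =>
    refine ⟨c • φ M hM, fun z => ?_⟩
    have hco : ⇑(SimpleFunc.piecewise M hM (SimpleFunc.const X c) (SimpleFunc.const X 0))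
        = fun x => c * (M.indicator (fun _ => (1:ℂ)) x) := by
      funext x
      simp only [SimpleFunc.coe_piecewise, SimpleFunc.coe_const]
      by_cases hx : x ∈ M <;> simp [Set.piecewise, hx]
    rw [hco]
    unfold qInt
    rw [integral_const_mul]
    have := qInt_indicator hφ hM z
    unfold qInt at this
    rw [this, ContinuousLinearMap.smul_apply, inner_smul_right]
  | @add f g _ hf hg =>
    obtain ⟨Tf, hTf⟩ := hf
    obtain ⟨Tg, hTg⟩ := hg
    refine ⟨Tf + Tg, fun z => ?_⟩
    have hco : ⇑(f + g) = ⇑f + ⇑g := by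
      funext x; simp
    unfold qInt
    rw [hco]
    simp only [Pi.add_apply]
    rw [integral_add (integrable_simple hφ f z) (integrable_simple hφ g z)]
    have h1 := hTf z; have h2 := hTg z
    unfold qInt at h1 h2
    rw [h1, h2]
    rw [ContinuousLinearMap.add_apply, inner_add_right]

lemma Lp_top_ae_bound (f : Lp ℂ ∞ μ) :
    ∃ C : ℝ, 0 ≤ C ∧ ∀ᵐ x ∂μ, ‖f x‖ ≤ C := by
  refine ⟨(eLpNormEssSup (⇑f) μ).toReal, ENNReal.toReal_nonneg, ?_⟩
  have hlt : eLpNormEssSup (⇑f) μ ≠ ⊤ := by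
    have h := (Lp.memLp f).2
    rwa [eLpNorm_exponent_top, lt_top_iff_ne_top] at h
  filter_upwards [ae_le_eLpNormEssSup (f := ⇑f) (μ := μ)] with x hx
  have h2 : ((‖f x‖₊ : ℝ≥0∞)).toReal ≤ (eLpNormEssSup (⇑f) μ).toReal :=
    ENNReal.toReal_mono hlt hx
  simpa using h2

variable (hcont : ∀ (M : Set X) (hM : MeasurableSet M), μ M = 0 → φ M hM = 0)
include hcont

lemma approx_qInt (hφ : IsPOVM φ) (f : Lp ℂ ∞ μ) :
    ∃ s : ℕ → SimpleFunc X ℂ,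
      ∀ z : H, Tendsto (fun n => qInt hφ (⇑(s n)) z) atTop (𝓝 (qInt hφ (⇑f) z)) := by
  obtain ⟨C, hC0, hbC⟩ := Lp_top_ae_bound f
  set g0 := (Lp.aestronglyMeasurable f).mk ⇑f with hg0def
  have hg0 : StronglyMeasurable g0 := (Lp.aestronglyMeasurable f).stronglyMeasurable_mk
  have heq : ⇑f =ᵐ[μ] g0 := (Lp.aestronglyMeasurable f).ae_eq_mk
  set g : X → ℂ := fun x => if ‖g0 x‖ ≤ C then g0 x else 0 with hgdef
  have hgmeas : Measurable g :=
    Measurable.ite (measurableSet_le hg0.measurable.norm measurable_const)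
      hg0.measurable measurable_const
  have hgb : ∀ x, ‖g x‖ ≤ C := by
    intro x
    show ‖(if ‖g0 x‖ ≤ C then g0 x else 0)‖ ≤ C
    by_cases h : ‖g0 x‖ ≤ C
    · rw [if_pos h]; exact h
    · rw [if_neg h]; simpa using hC0
  have hgeq : ⇑f =ᵐ[μ] g := by
    filter_upwards [heq, hbC] with x h1 h2
    have h3 : ‖g0 x‖ ≤ C := by rw [← h1]; exact h2
    show (f : X → ℂ) x = (if ‖g0 x‖ ≤ C then g0 x else 0)
    rw [if_pos h3, h1]
  refine ⟨fun n => SimpleFunc.approxOn g hgmeas Set.univ 0 (Set.mem_univ 0) n, fun z => ?_⟩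
  have h1 : qInt hφ (⇑f) z = qInt hφ g z := qInt_congr hφ hcont z hgeq
  rw [h1]
  unfold qInt
  apply tendsto_integral_of_dominated_convergence (fun _ => C + C)
  · exact fun n => (SimpleFunc.aestronglyMeasurable _)
  · exact integrable_const _
  · intro n
    refine Eventually.of_forall fun x => ?_
    calc ‖SimpleFunc.approxOn g hgmeas Set.univ 0 (Set.mem_univ 0) n x‖
        ≤ ‖g x‖ + ‖g x‖ := SimpleFunc.norm_approxOn_zero_le hgmeas _ x n
      _ ≤ C + C := add_le_add (hgb x) (hgb x)
  · refine Eventually.of_forall fun x => ?_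
    apply SimpleFunc.tendsto_approxOn hgmeas (Set.mem_univ 0)
    simp

lemma bForm_lim (hφ : IsPOVM φ) (f : Lp ℂ ∞ μ) :
    ∃ T : ℕ → H →L[ℂ] H, ∀ x y : H,
      Tendsto (fun n => (⟪x, T n y⟫ : ℂ)) atTop (𝓝 (bForm hφ (⇑f) x y)) := by
  obtain ⟨s, hs⟩ := approx_qInt hcont hφ f
  choose T hT using fun n => qInt_simple hφ (s n)
  refine ⟨T, fun x y => ?_⟩
  have h1 : ∀ n, (⟪x, T n y⟫ : ℂ) = bForm hφ (⇑(s n)) x y := fun n =>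
    (bForm_of_op hφ (hT n) x y).symm
  have h2 : Tendsto (fun n => bForm hφ (⇑(s n)) x y) atTop (𝓝 (bForm hφ (⇑f) x y)) := by
    unfold bForm
    exact ((((hs (x+y)).sub (hs (x-y))).sub (tendsto_const_nhds.mul (hs _))).add
      (tendsto_const_nhds.mul (hs _))).div_const 4
  exact h2.congr (fun n => (h1 n).symm)

lemma bForm_add_left (hφ : IsPOVM φ) (f : Lp ℂ ∞ μ) (x x' y : H) :
    bForm hφ (⇑f) (x + x') y = bForm hφ (⇑f) x y + bForm hφ (⇑f) x' y := by
  obtain ⟨T, hT⟩ := bForm_lim hcont hφ f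
  refine tendsto_nhds_unique (f := fun n => (⟪x + x', T n y⟫ : ℂ)) (hT (x + x') y) ?_
  exact ((hT x y).add (hT x' y)).congr (fun n => (inner_add_left x x' (T n y)).symm)

lemma bForm_smul_left (hφ : IsPOVM φ) (f : Lp ℂ ∞ μ) (c : ℂ) (x y : H) :
    bForm hφ (⇑f) (c • x) y = (starRingEnd ℂ) c * bForm hφ (⇑f) x y := by
  obtain ⟨T, hT⟩ := bForm_lim hcont hφ f
  refine tendsto_nhds_unique (f := fun n => (⟪c • x, T n y⟫ : ℂ)) (hT (c • x) y) ?_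
  exact (tendsto_const_nhds.mul (hT x y)).congr
    (fun n => (inner_smul_left x (T n y) c).symm)

lemma bForm_add_right (hφ : IsPOVM φ) (f : Lp ℂ ∞ μ) (x y y' : H) :
    bForm hφ (⇑f) x (y + y') = bForm hφ (⇑f) x y + bForm hφ (⇑f) x y' := by
  obtain ⟨T, hT⟩ := bForm_lim hcont hφ f
  refine tendsto_nhds_unique (f := fun n => (⟪x, T n (y + y')⟫ : ℂ)) (hT x (y + y')) ?_
  refine ((hT x y).add (hT x y')).congr (fun n => ?_)
  rw [map_add, inner_add_right]

lemma bForm_smul_right (hφ : IsPOVM φ) (f : Lp ℂ ∞ μ) (c : ℂ) (x y : H) :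
    bForm hφ (⇑f) x (c • y) = c * bForm hφ (⇑f) x y := by
  obtain ⟨T, hT⟩ := bForm_lim hcont hφ f
  refine tendsto_nhds_unique (f := fun n => (⟪x, T n (c • y)⟫ : ℂ)) (hT x (c • y)) ?_
  refine (tendsto_const_nhds.mul (hT x y)).congr (fun n => ?_)
  rw [ContinuousLinearMap.map_smul, inner_smul_right]

lemma qInt_add_fun (hφ : IsPOVM φ) (f g : Lp ℂ ∞ μ) (z : H) :
    qInt hφ (⇑(f + g)) z = qInt hφ (⇑f) z + qInt hφ (⇑g) z := by
  obtain ⟨C, _, hbC⟩ := Lp_top_ae_bound f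
  obtain ⟨D, _, hbD⟩ := Lp_top_ae_bound g
  rw [qInt_congr hφ hcont z (Lp.coeFn_add f g)]
  unfold qInt
  simp only [Pi.add_apply]
  exact integral_add (integrable_povm hφ hcont z (Lp.aestronglyMeasurable f) hbC)
    (integrable_povm hφ hcont z (Lp.aestronglyMeasurable g) hbD)

lemma qInt_smul_fun (hφ : IsPOVM φ) (c : ℂ) (f : Lp ℂ ∞ μ) (z : H) :
    qInt hφ (⇑(c • f)) z = c * qInt hφ (⇑f) z := by
  rw [qInt_congr hφ hcont z (Lp.coeFn_smul c f)]
  unfold qInt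
  simp only [Pi.smul_apply, smul_eq_mul]
  exact integral_const_mul c _

lemma bForm_add_fun (hφ : IsPOVM φ) (f g : Lp ℂ ∞ μ) (x y : H) :
    bForm hφ (⇑(f + g)) x y = bForm hφ (⇑f) x y + bForm hφ (⇑g) x y := by
  unfold bForm
  rw [qInt_add_fun hcont hφ, qInt_add_fun hcont hφ, qInt_add_fun hcont hφ,
    qInt_add_fun hcont hφ]
  ring

lemma bForm_smul_fun (hφ : IsPOVM φ) (c : ℂ) (f : Lp ℂ ∞ μ) (x y : H) :
    bForm hφ (⇑(c • f)) x y = c * bForm hφ (⇑f) x y := by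
  unfold bForm
  rw [qInt_smul_fun hcont hφ, qInt_smul_fun hcont hφ, qInt_smul_fun hcont hφ,
    qInt_smul_fun hcont hφ]
  ring

lemma bForm_bound (hφ : IsPOVM φ) {f : X → ℂ} {C : ℝ} (hb : ∀ᵐ x ∂μ, ‖f x‖ ≤ C) (x y : H) :
    ‖bForm hφ f x y‖ ≤ C * (‖x‖^2 + ‖y‖^2) := by
  have q1 := qInt_norm_le hφ hcont (x + y) hb
  have q2 := qInt_norm_le hφ hcont (x - y) hb
  have q3 := qInt_norm_le hφ hcont (x + Complex.I • y) hb
  have q4 := qInt_norm_le hφ hcont (x - Complex.I • y) hb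
  have par1 : ‖x + y‖^2 + ‖x - y‖^2 = 2*(‖x‖^2 + ‖y‖^2) := by
    have := parallelogram_law_with_norm ℂ x y
    nlinarith [this]
  have hIy : ‖Complex.I • y‖ = ‖y‖ := by
    rw [norm_smul, Complex.norm_I, one_mul]
  have par2 : ‖x + Complex.I • y‖^2 + ‖x - Complex.I • y‖^2 = 2*(‖x‖^2 + ‖y‖^2) := by
    have hthis := parallelogram_law_with_norm ℂ x (Complex.I • y)
    rw [hIy] at hthis
    nlinarith [hthis]
  have hnorm : ‖bForm hφ f x y‖ ≤ (‖qInt hφ f (x + y)‖ + ‖qInt hφ f (x - y)‖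
      + ‖qInt hφ f (x + Complex.I • y)‖ + ‖qInt hφ f (x - Complex.I • y)‖) / 4 := by
    unfold bForm
    rw [norm_div]
    have h4 : ‖(4:ℂ)‖ = 4 := by norm_num
    rw [h4]
    gcongr
    calc ‖qInt hφ f (x + y) - qInt hφ f (x - y) - Complex.I * qInt hφ f (x + Complex.I • y)
          + Complex.I * qInt hφ f (x - Complex.I • y)‖
        ≤ ‖qInt hφ f (x + y) - qInt hφ f (x - y) - Complex.I * qInt hφ f (x + Complex.I • y)‖
          + ‖Complex.I * qInt hφ f (x - Complex.I • y)‖ := norm_add_le _ _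
      _ ≤ ‖qInt hφ f (x + y) - qInt hφ f (x - y)‖ + ‖Complex.I * qInt hφ f (x + Complex.I • y)‖
          + ‖Complex.I * qInt hφ f (x - Complex.I • y)‖ := by
            gcongr
            exact norm_sub_le _ _
      _ ≤ ‖qInt hφ f (x + y)‖ + ‖qInt hφ f (x - y)‖ + ‖Complex.I * qInt hφ f (x + Complex.I • y)‖
          + ‖Complex.I * qInt hφ f (x - Complex.I • y)‖ := by
            gcongr
            exact norm_sub_le _ _
      _ = ‖qInt hφ f (x + y)‖ + ‖qInt hφ f (x - y)‖ + ‖qInt hφ f (x + Complex.I • y)‖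
          + ‖qInt hφ f (x - Complex.I • y)‖ := by
            rw [norm_mul, norm_mul, Complex.norm_I, one_mul, one_mul]
  calc ‖bForm hφ f x y‖
      ≤ (‖qInt hφ f (x + y)‖ + ‖qInt hφ f (x - y)‖ + ‖qInt hφ f (x + Complex.I • y)‖
        + ‖qInt hφ f (x - Complex.I • y)‖) / 4 := hnorm
    _ ≤ (C * ‖x + y‖^2 + C * ‖x - y‖^2 + C * ‖x + Complex.I • y‖^2
        + C * ‖x - Complex.I • y‖^2) / 4 := by gcongr
    _ = C * ((‖x + y‖^2 + ‖x - y‖^2) + (‖x + Complex.I • y‖^2 + ‖x - Complex.I • y‖^2)) / 4 := by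
        ring
    _ = C * ((2*(‖x‖^2 + ‖y‖^2)) + (2*(‖x‖^2 + ‖y‖^2))) / 4 := by rw [par1, par2]
    _ = C * (‖x‖^2 + ‖y‖^2) := by ring

lemma bForm_zero_left (hφ : IsPOVM φ) (f : Lp ℂ ∞ μ) (y : H) :
    bForm hφ (⇑f) 0 y = 0 := by
  have h := bForm_smul_left hcont hφ f 0 0 y
  simpa using h

lemma bForm_zero_right (hφ : IsPOVM φ) (f : Lp ℂ ∞ μ) (x : H) :
    bForm hφ (⇑f) x 0 = 0 := by
  have h := bForm_smul_right hcont hφ f 0 x 0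
  simpa using h

lemma bForm_bound' (hφ : IsPOVM φ) (f : Lp ℂ ∞ μ) {C : ℝ} (hC0 : 0 ≤ C)
    (hb : ∀ᵐ x ∂μ, ‖f x‖ ≤ C) (x y : H) :
    ‖bForm hφ (⇑f) x y‖ ≤ 2 * C * ‖x‖ * ‖y‖ := by
  by_cases hx : x = 0
  · subst hx
    rw [bForm_zero_left hcont hφ f y]
    simp
  by_cases hy : y = 0
  · subst hy
    rw [bForm_zero_right hcont hφ f x]
    simp
  have hxpos : 0 < ‖x‖ := norm_pos_iff.mpr hx
  have hypos : 0 < ‖y‖ := norm_pos_iff.mpr hy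
  set t : ℝ := Real.sqrt (‖y‖ / ‖x‖) with htdef
  have htpos : 0 < t := Real.sqrt_pos.mpr (div_pos hypos hxpos)
  have ht2 : t^2 = ‖y‖ / ‖x‖ := Real.sq_sqrt (le_of_lt (div_pos hypos hxpos))
  have hkey : bForm hφ (⇑f) ((t : ℂ) • x) (((t⁻¹ : ℝ) : ℂ) • y) = bForm hφ (⇑f) x y := by
    rw [bForm_smul_left hcont hφ, bForm_smul_right hcont hφ, Complex.conj_ofReal,
      ← mul_assoc]
    have : ((t : ℝ) : ℂ) * ((t⁻¹ : ℝ) : ℂ) = 1 := by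
      push_cast
      rw [mul_inv_cancel₀]
      exact_mod_cast htpos.ne'
    rw [this, one_mul]
  rw [← hkey]
  calc ‖bForm hφ (⇑f) ((t : ℂ) • x) (((t⁻¹ : ℝ) : ℂ) • y)‖
      ≤ C * (‖(t : ℂ) • x‖^2 + ‖((t⁻¹ : ℝ) : ℂ) • y‖^2) := bForm_bound hcont hφ hb _ _
    _ = C * (t^2 * ‖x‖^2 + (t⁻¹)^2 * ‖y‖^2) := by
        rw [norm_smul, norm_smul, Complex.norm_real, Complex.norm_real,
          Real.norm_eq_abs, Real.norm_eq_abs, abs_of_pos htpos, abs_of_pos (inv_pos.mpr htpos)]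
        ring
    _ = 2 * C * ‖x‖ * ‖y‖ := by
        rw [ht2, inv_pow, ht2]
        field_simp
        ring

def LpB (f : Lp ℂ ∞ μ) : ℝ := (eLpNormEssSup (⇑f) μ).toReal

omit hcont in
lemma LpB_nonneg (f : Lp ℂ ∞ μ) : 0 ≤ LpB f := ENNReal.toReal_nonneg

omit hcont in
lemma LpB_ae (f : Lp ℂ ∞ μ) : ∀ᵐ x ∂μ, ‖f x‖ ≤ LpB f := by
  have hlt : eLpNormEssSup (⇑f) μ ≠ ⊤ := by
    have h := (Lp.memLp f).2
    rwa [eLpNorm_exponent_top, lt_top_iff_ne_top] at h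
  filter_upwards [ae_le_eLpNormEssSup (f := ⇑f) (μ := μ)] with x hx
  have h2 : ((‖f x‖₊ : ℝ≥0∞)).toReal ≤ (eLpNormEssSup (⇑f) μ).toReal :=
    ENNReal.toReal_mono hlt hx
  simpa [LpB] using h2

def psiAux (hφ : IsPOVM φ) (f : Lp ℂ ∞ μ) (y : H) : H :=
  (InnerProductSpace.toDual ℂ H).symm
    (LinearMap.mkContinuous
      { toFun := fun x => (starRingEnd ℂ) (bForm hφ (⇑f) x y)
        map_add' := fun x x' => by
          rw [bForm_add_left hcont hφ, map_add]
        map_smul' := fun c x => by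
          simp only [RingHom.id_apply, smul_eq_mul]
          rw [bForm_smul_left hcont hφ, map_mul, Complex.conj_conj] }
      (2 * LpB f * ‖y‖)
      (fun x => by
        simp only [LinearMap.coe_mk, AddHom.coe_mk]
        rw [starRingEnd_apply, norm_star]
        calc ‖bForm hφ (⇑f) x y‖ ≤ 2 * LpB f * ‖x‖ * ‖y‖ :=
              bForm_bound' hcont hφ f (LpB_nonneg f) (LpB_ae f) x y
          _ = 2 * LpB f * ‖y‖ * ‖x‖ := by ring))

lemma inner_psiAux (hφ : IsPOVM φ) (f : Lp ℂ ∞ μ) (x y : H) :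
    (⟪x, psiAux hcont hφ f y⟫ : ℂ) = bForm hφ (⇑f) x y := by
  rw [← inner_conj_symm]
  unfold psiAux
  rw [InnerProductSpace.toDual_symm_apply]
  simp only [LinearMap.mkContinuous_apply, LinearMap.coe_mk, AddHom.coe_mk]
  exact Complex.conj_conj _

lemma psiAux_norm (hφ : IsPOVM φ) (f : Lp ℂ ∞ μ) (y : H) :
    ‖psiAux hcont hφ f y‖ ≤ 2 * LpB f * ‖y‖ := by
  unfold psiAux
  rw [LinearIsometryEquiv.norm_map]
  exact LinearMap.mkContinuous_norm_le _
    (mul_nonneg (mul_nonneg (by norm_num) (LpB_nonneg f)) (norm_nonneg y)) _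

def psiFun (hφ : IsPOVM φ) (f : Lp ℂ ∞ μ) : H →L[ℂ] H :=
  LinearMap.mkContinuous
    { toFun := psiAux hcont hφ f
      map_add' := fun y y' => ext_inner_left ℂ fun v => by
        rw [inner_psiAux, inner_add_right, inner_psiAux, inner_psiAux,
          bForm_add_right hcont hφ]
      map_smul' := fun c y => ext_inner_left ℂ fun v => by
        simp only [RingHom.id_apply]
        rw [inner_psiAux, inner_smul_right, inner_psiAux, bForm_smul_right hcont hφ] }
    (2 * LpB f)
    (fun y => by
      simp only [LinearMap.coe_mk, AddHom.coe_mk]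
      exact psiAux_norm hcont hφ f y)

lemma inner_psiFun (hφ : IsPOVM φ) (f : Lp ℂ ∞ μ) (x y : H) :
    (⟪x, psiFun hcont hφ f y⟫ : ℂ) = bForm hφ (⇑f) x y :=
  inner_psiAux hcont hφ f x y

def psiL (hφ : IsPOVM φ) : Lp ℂ ∞ μ →ₗ[ℂ] (H →L[ℂ] H) where
  toFun := psiFun hcont hφ
  map_add' := fun f g => by
    ext y
    apply ext_inner_left ℂ
    intro v
    rw [ContinuousLinearMap.add_apply, inner_add_right, inner_psiFun, inner_psiFun,
      inner_psiFun, bForm_add_fun hcont hφ]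
  map_smul' := fun c f => by
    ext y
    apply ext_inner_left ℂ
    intro v
    simp only [RingHom.id_apply]
    rw [ContinuousLinearMap.smul_apply, inner_smul_right, inner_psiFun, inner_psiFun,
      bForm_smul_fun hcont hφ]

lemma psiL_apply (hφ : IsPOVM φ) (f : Lp ℂ ∞ μ) :
    psiL hcont hφ f = psiFun hcont hφ f := rfl

variable [IsFiniteMeasure μ]

lemma psiL_indicator (hφ : IsPOVM φ) (M : Set X) (hM : MeasurableSet M) :
    psiL hcont hφ (indicatorConstLp ∞ hM (measure_ne_top μ M) (1:ℂ)) = φ M hM := by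
  rw [psiL_apply]
  ext z
  apply ext_inner_left ℂ
  intro v
  rw [inner_psiFun]
  refine bForm_of_op hφ (fun w => ?_) v z
  rw [qInt_congr hφ hcont w indicatorConstLp_coeFn]
  exact qInt_indicator hφ hM w

lemma psiL_const (hφ : IsPOVM φ) :
    psiL hcont hφ (Lp.const ∞ μ (1:ℂ)) = 1 := by
  rw [← indicatorConstLp_univ, psiL_indicator hcont hφ Set.univ MeasurableSet.univ]
  exact hφ.2.1

omit [IsFiniteMeasure μ] in
lemma psiL_positive (hφ : IsPOVM φ) : IsPositiveLinfMap (psiL hcont hφ) := by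
  intro f hf z
  have h1 : (⟪psiFun hcont hφ f z, z⟫ : ℂ) = (starRingEnd ℂ) (qInt hφ (⇑f) z) := by
    rw [← inner_conj_symm, inner_psiFun hcont hφ f z z, bForm_diag]
  rw [psiL_apply, h1]
  have hfre : ∀ᵐ x ∂(povmMeasure hφ z), (0:ℂ) ≤ f x := ae_povm hφ hcont z hf
  have hint : Integrable (⇑f) (povmMeasure hφ z) :=
    integrable_povm hφ hcont z (Lp.aestronglyMeasurable f) (LpB_ae f)
  have him : (qInt hφ (⇑f) z).im = 0 := by
    unfold qInt
    rw [← RCLike.im_to_complex, ← integral_im hint]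
    rw [show (∫ x, RCLike.im (f x) ∂(povmMeasure hφ z)) = ∫ x, (0:ℝ) ∂(povmMeasure hφ z) from
      integral_congr_ae (hfre.mono fun x hx => by
        simp only [RCLike.im_to_complex]
        exact ((Complex.le_def.mp hx).2).symm ▸ (by simp : (0:ℂ).im = 0))]
    simp
  have hre : 0 ≤ (qInt hφ (⇑f) z).re := by
    unfold qInt
    rw [← RCLike.re_to_complex, ← integral_re hint]
    apply integral_nonneg_of_ae
    filter_upwards [hfre] with x hx
    simpa using (Complex.le_def.mp hx).1
  rw [Complex.le_def]
  constructor
  · simpa using hre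
  · simp [him]

omit [IsFiniteMeasure μ] in
lemma psiL_normal (hφ : IsPOVM φ) : IsNormalLinfMap (psiL hcont hφ) := by
  intro f g C hb hmono hlim x y
  have key : ∀ (h : Lp ℂ ∞ μ),
      (⟪psiL hcont hφ h x, y⟫ : ℂ) = star (bForm hφ (⇑h) y x) := fun h => by
    rw [psiL_apply, ← inner_conj_symm, inner_psiFun hcont hφ h y x, starRingEnd_apply]
  have hq : ∀ z : H, Tendsto (fun n => qInt hφ (⇑(f n)) z) atTop (𝓝 (qInt hφ (⇑g) z)) := by
    intro z
    unfold qInt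
    apply tendsto_integral_of_dominated_convergence (fun _ => C)
    · exact fun n => (Lp.aestronglyMeasurable (f n)).mono_ac (povmMeasure_ac hφ hcont z)
    · exact integrable_const _
    · exact fun n => ae_povm hφ hcont z ((hb n).mono fun x hx => hx.2)
    · exact ae_povm hφ hcont z hlim
  have hB : Tendsto (fun n => bForm hφ (⇑(f n)) y x) atTop (𝓝 (bForm hφ (⇑g) y x)) := by
    unfold bForm
    exact ((((hq (y+x)).sub (hq (y-x))).sub (tendsto_const_nhds.mul (hq _))).add
      (tendsto_const_nhds.mul (hq _))).div_const 4
  have hconv := hB.star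
  rw [show (⟪psiL hcont hφ g x, y⟫ : ℂ) = star (bForm hφ (⇑g) y x) from key g]
  exact hconv.congr (fun n => (key (f n)).symm)

omit hcont in
lemma psi_unique (hφ : IsPOVM φ) (ψ₁ ψ₂ : Lp ℂ ∞ μ →ₗ[ℂ] (H →L[ℂ] H))
    (hn₁ : IsNormalLinfMap ψ₁) (hn₂ : IsNormalLinfMap ψ₂)
    (hi₁ : ∀ (M : Set X) (hM : MeasurableSet M),
      ψ₁ (indicatorConstLp ∞ hM (measure_ne_top μ M) (1:ℂ)) = φ M hM)
    (hi₂ : ∀ (M : Set X) (hM : MeasurableSet M),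
      ψ₂ (indicatorConstLp ∞ hM (measure_ne_top μ M) (1:ℂ)) = φ M hM) :
    ψ₁ = ψ₂ := by
  have hsimple : ∀ (s : SimpleFunc X ℂ) (F : Lp ℂ ∞ μ), (⇑F =ᵐ[μ] ⇑s) → ψ₁ F = ψ₂ F := by
    intro s
    induction s using SimpleFunc.induction with
    | @const c M hM =>
      intro F hF
      have hco : ⇑(SimpleFunc.piecewise M hM (SimpleFunc.const X c) (SimpleFunc.const X 0))
          = fun x => c * (M.indicator (fun _ => (1:ℂ)) x) := by
        funext x
        simp only [SimpleFunc.coe_piecewise, SimpleFunc.coe_const]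
        by_cases hx : x ∈ M <;> simp [Set.piecewise, hx]
      have heq2 : ⇑(c • indicatorConstLp ∞ hM (measure_ne_top μ M) (1:ℂ)) =ᵐ[μ] ⇑F := by
        filter_upwards [Lp.coeFn_smul c (indicatorConstLp ∞ hM (measure_ne_top μ M) (1:ℂ)),
          (indicatorConstLp_coeFn :
            ⇑(indicatorConstLp ∞ hM (measure_ne_top μ M) (1:ℂ))
              =ᵐ[μ] M.indicator fun _ => (1:ℂ)), hF] with x h1 h2 h3
        rw [h1, Pi.smul_apply, h2, h3, hco]
        simp [smul_eq_mul]
      have hFeq : F = c • indicatorConstLp ∞ hM (measure_ne_top μ M) (1:ℂ) :=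
        Lp.ext heq2.symm
      rw [hFeq, LinearMap.map_smul, LinearMap.map_smul, hi₁ M hM, hi₂ M hM]
    | @add f g hdisj ihf ihg =>
      intro F hF
      have hmf := SimpleFunc.memLp_top f μ
      have hmg := SimpleFunc.memLp_top g μ
      set Ff := hmf.toLp ⇑f with hFfdef
      set Fg := hmg.toLp ⇑g with hFgdef
      have hFf : ⇑Ff =ᵐ[μ] ⇑f := MemLp.coeFn_toLp hmf
      have hFg : ⇑Fg =ᵐ[μ] ⇑g := MemLp.coeFn_toLp hmg
      have hFe : F = Ff + Fg := by
        apply Lp.ext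
        filter_upwards [hF, Lp.coeFn_add Ff Fg, hFf, hFg] with x h1 h2 h3 h4
        rw [h1, h2]
        simp only [SimpleFunc.coe_add, Pi.add_apply]
        rw [h3, h4]
      rw [hFe, map_add, map_add, ihf Ff hFf, ihg Fg hFg]
  have hreal : ∀ F : Lp ℂ ∞ μ, (∀ᵐ x ∂μ, (F x).im = 0) → ψ₁ F = ψ₂ F := by
    intro F him
    have hCae := LpB_ae F
    set C := LpB F with hCdef
    have hC0 : 0 ≤ C := LpB_nonneg F
    set g0 := (Lp.aestronglyMeasurable F).mk ⇑F with hg0def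
    have hg0 : StronglyMeasurable g0 := (Lp.aestronglyMeasurable F).stronglyMeasurable_mk
    have heq : ⇑F =ᵐ[μ] g0 := (Lp.aestronglyMeasurable F).ae_eq_mk
    set u : X → ℝ := fun x => max (-C) (min C (g0 x).re) with hudef
    have humeas : Measurable u :=
      measurable_const.max (measurable_const.min (Complex.measurable_re.comp hg0.measurable))
    have hub : ∀ x, |u x| ≤ C := by
      intro x
      rw [abs_le]
      exact ⟨le_max_left _ _, max_le (by linarith) (min_le_left _ _)⟩
    have hueq : (fun x => ((u x : ℝ) : ℂ)) =ᵐ[μ] ⇑F := by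
      filter_upwards [heq, him, hCae] with x h1 h2 h3
      have hre : |(g0 x).re| ≤ C := by
        rw [← h1]
        calc |(F x).re| ≤ ‖F x‖ := Complex.abs_re_le_norm _
          _ = ‖F x‖ := rfl
          _ ≤ C := h3
      have hux : u x = (g0 x).re := by
        rw [hudef]
        dsimp only
        rw [min_eq_right (abs_le.mp hre).2, max_eq_right (abs_le.mp hre).1]
      rw [hux, ← h1]
      exact Complex.ext (by simp) (by simp [h2])
    set hE : X → ℝ≥0∞ := fun x => ENNReal.ofReal (u x + C) with hEdef
    have hEmeas : Measurable hE := (humeas.add_const C).ennreal_ofReal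
    have hEle : ∀ x, hE x ≤ ENNReal.ofReal (2*C) := fun x =>
      ENNReal.ofReal_le_ofReal (by have := (abs_le.mp (hub x)).2; linarith)
    have happle : ∀ n x, SimpleFunc.eapprox hE n x ≤ hE x := by
      intro n x
      conv_rhs => rw [← SimpleFunc.iSup_eapprox_apply hEmeas x]
      exact le_iSup (fun n => SimpleFunc.eapprox hE n x) n
    have hfin : ∀ n x, SimpleFunc.eapprox hE n x ≠ ⊤ := fun n x =>
      ((happle n x).trans_lt (lt_of_le_of_lt (hEle x) ENNReal.ofReal_lt_top)).ne
    set v : ℕ → X → ℝ := fun n x => (SimpleFunc.eapprox hE n x).toReal - C with hvdef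
    have hvb : ∀ n x, |v n x| ≤ C := by
      intro n x
      rw [abs_le]
      constructor
      · have h0 : (0:ℝ) ≤ (SimpleFunc.eapprox hE n x).toReal := ENNReal.toReal_nonneg
        simp only [hvdef]; linarith
      · have h1 : (SimpleFunc.eapprox hE n x).toReal ≤ 2*C := by
          have h2 := ENNReal.toReal_mono (ENNReal.ofReal_ne_top) ((happle n x).trans (hEle x))
          rwa [ENNReal.toReal_ofReal (by linarith)] at h2
        simp only [hvdef]; linarith
    have hvmono : ∀ x n, v n x ≤ v (n+1) x := by
      intro x n
      have h1 := SimpleFunc.monotone_eapprox hE (Nat.le_succ n) x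
      have h2 := ENNReal.toReal_mono (hfin (n+1) x) h1
      simp only [hvdef]; linarith
    have hvtend : ∀ x, Tendsto (fun n => v n x) atTop (𝓝 (u x)) := by
      intro x
      have h1 : Tendsto (fun n => (SimpleFunc.eapprox hE n x : ℝ≥0∞)) atTop (𝓝 (hE x)) := by
        rw [← SimpleFunc.iSup_eapprox_apply hEmeas x]
        exact tendsto_atTop_iSup (fun a b hab => SimpleFunc.monotone_eapprox hE hab x)
      have hEne : hE x ≠ ⊤ := (lt_of_le_of_lt (hEle x) ENNReal.ofReal_lt_top).ne
      have h2 := (ENNReal.tendsto_toReal hEne).comp h1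
      have h3 : (hE x).toReal = u x + C := by
        rw [hEdef]
        dsimp only
        rw [ENNReal.toReal_ofReal (by have := (abs_le.mp (hub x)).1; linarith)]
      rw [h3] at h2
      have h4 := h2.sub_const C
      simpa [hvdef, Function.comp] using h4
    set sv : ℕ → SimpleFunc X ℂ := fun n =>
      (SimpleFunc.eapprox hE n).map (fun e => ((e.toReal - C : ℝ) : ℂ)) with hsvdef
    have hsv : ∀ n x, sv n x = ((v n x : ℝ) : ℂ) := fun n x => rfl
    have hmem : ∀ n, MemLp (⇑(sv n)) ∞ μ := fun n => SimpleFunc.memLp_top _ μ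
    set fn : ℕ → Lp ℂ ∞ μ := fun n => (hmem n).toLp _ with hfndef
    have hfn : ∀ n, ⇑(fn n) =ᵐ[μ] ⇑(sv n) := fun n => MemLp.coeFn_toLp (hmem n)
    have hcond1 : ∀ n, ∀ᵐ x ∂μ, ((fn n) x).im = 0 ∧ ‖(fn n) x‖ ≤ C := by
      intro n
      filter_upwards [hfn n] with x hx
      rw [hx, hsv n x]
      constructor
      · simp
      · rw [Complex.norm_real, Real.norm_eq_abs]
        exact hvb n x
    have hcond2 : ∀ᵐ x ∂μ, ∀ n, ((fn n) x).re ≤ ((fn (n+1)) x).re := by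
      filter_upwards [ae_all_iff.mpr hfn] with x hx n
      rw [hx n, hx (n+1), hsv, hsv]
      simpa using hvmono x n
    have hcond3 : ∀ᵐ x ∂μ, Tendsto (fun n => (fn n) x) atTop (𝓝 (F x)) := by
      filter_upwards [ae_all_iff.mpr hfn, hueq] with x hx hux
      rw [← hux]
      have h5 : Tendsto (fun n => ((v n x : ℝ) : ℂ)) atTop (𝓝 ((u x : ℝ) : ℂ)) :=
        (Complex.continuous_ofReal.tendsto _).comp (hvtend x)
      exact h5.congr fun n => ((hx n).trans (hsv n x)).symm
    have h1 := hn₁ fn F C hcond1 hcond2 hcond3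
    have h2 := hn₂ fn F C hcond1 hcond2 hcond3
    have heqn : ∀ n, ψ₁ (fn n) = ψ₂ (fn n) := fun n => hsimple (sv n) (fn n) (hfn n)
    refine ContinuousLinearMap.ext fun x => ?_
    apply ext_inner_right ℂ
    intro y
    refine tendsto_nhds_unique ?_ (h2 x y)
    refine (h1 x y).congr fun n => ?_
    simp only [heqn n]
  apply LinearMap.ext
  intro F
  have hCae := LpB_ae F
  set C := LpB F with hCdef
  set g0 := (Lp.aestronglyMeasurable F).mk ⇑F with hg0def
  have hg0 : StronglyMeasurable g0 := (Lp.aestronglyMeasurable F).stronglyMeasurable_mk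
  have heq : ⇑F =ᵐ[μ] g0 := (Lp.aestronglyMeasurable F).ae_eq_mk
  have hmre : MemLp (fun x => (((g0 x).re : ℝ) : ℂ)) ∞ μ := by
    refine memLp_top_of_bound ?_ C ?_
    · exact ((Complex.measurable_ofReal.comp
        (Complex.measurable_re.comp hg0.measurable)).stronglyMeasurable).aestronglyMeasurable
    · filter_upwards [heq, hCae] with x h1 h2
      rw [Complex.norm_real, Real.norm_eq_abs, ← h1]
      calc |(F x).re| ≤ ‖F x‖ := Complex.abs_re_le_norm _
        _ = ‖F x‖ := rfl
        _ ≤ C := h2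
  have hmim : MemLp (fun x => (((g0 x).im : ℝ) : ℂ)) ∞ μ := by
    refine memLp_top_of_bound ?_ C ?_
    · exact ((Complex.measurable_ofReal.comp
        (Complex.measurable_im.comp hg0.measurable)).stronglyMeasurable).aestronglyMeasurable
    · filter_upwards [heq, hCae] with x h1 h2
      rw [Complex.norm_real, Real.norm_eq_abs, ← h1]
      calc |(F x).im| ≤ ‖F x‖ := Complex.abs_im_le_norm _
        _ = ‖F x‖ := rfl
        _ ≤ C := h2
  set Fre := hmre.toLp _ with hFredef
  set Fim := hmim.toLp _ with hFimdef
  have hdecomp : F = Fre + Complex.I • Fim := by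
    apply Lp.ext
    filter_upwards [heq, MemLp.coeFn_toLp hmre, MemLp.coeFn_toLp hmim,
      Lp.coeFn_add Fre (Complex.I • Fim), Lp.coeFn_smul Complex.I Fim] with x h1 h2 h3 h4 h5
    rw [h4, Pi.add_apply, h2, h5, Pi.smul_apply, h3, smul_eq_mul, h1, mul_comm]
    exact (Complex.re_add_im (g0 x)).symm
  have hre1 : ∀ᵐ x ∂μ, (Fre x).im = 0 := by
    filter_upwards [MemLp.coeFn_toLp hmre] with x hx
    rw [hx]
    simp
  have him1 : ∀ᵐ x ∂μ, (Fim x).im = 0 := by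
    filter_upwards [MemLp.coeFn_toLp hmim] with x hx
    rw [hx]
    simp
  rw [hdecomp, map_add, map_add, LinearMap.map_smul, LinearMap.map_smul,
    hreal Fre hre1, hreal Fim him1]

end Aux

theorem stmt7 {X : Type u} [MeasurableSpace X] (μ : Measure X) [IsFiniteMeasure μ]
    {H : Type v} [NormedAddCommGroup H] [InnerProductSpace ℂ H] [CompleteSpace H]
    (φ : ∀ M : Set X, MeasurableSet M → (H →L[ℂ] H)) (hφ : IsPOVM φ)
    (hcont : ∀ (M : Set X) (hM : MeasurableSet M), μ M = 0 → φ M hM = 0) :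
    ∃! ψ : Lp ℂ ∞ μ →ₗ[ℂ] (H →L[ℂ] H),
      IsPositiveLinfMap ψ ∧
      ψ (Lp.const ∞ μ (1 : ℂ)) = 1 ∧
      IsNormalLinfMap ψ ∧
      ∀ (M : Set X) (hM : MeasurableSet M),
        ψ (indicatorConstLp ∞ hM (measure_ne_top μ M) (1 : ℂ)) = φ M hM := by
  refine ⟨psiL hcont hφ, ⟨psiL_positive hcont hφ, psiL_const hcont hφ, psiL_normal hcont hφ,
    fun M hM => psiL_indicator hcont hφ M hM⟩, ?_⟩
  rintro ψ' ⟨hp', hu', hn', hi'⟩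
  exact psi_unique hφ ψ' (psiL hcont hφ) hn' (psiL_normal hcont hφ) hi'
    (fun M hM => psiL_indicator hcont hφ M hM)

end
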